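/- Let Ḡ be an orientation of a finite undirected simple graph G=(V,E) with maximum out-degree Δ satisfying Invariant 2 (no improving path starting at any vertex of out-degree Δ), let {u,v} ∉ E with odeg(u,Ḡ) = odeg(v,Ḡ) = Δ, and let G̃ be the orientation of G + {u,v} obtained from Ḡ by adding the directed edge (u,v). If there is no improving path in G̃ starting at u, then G̃ has maximum out-degree Δ+1, u is the only vertex of out-degree Δ+1 in G̃, and G̃ satisfies Invariant 2. -/
import Mathlib


open Finset

/-- An orientation of a simple graph `G`: a choice, for each edge `{u,v}` of `G`,
of exactly one of the directed edges `(u,v)`, `(v,u)`. -/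
structure GraphOrientation {V : Type*} (G : SimpleGraph V) where
  dir : V → V → Bool
  dir_adj : ∀ u v, dir u v = true → G.Adj u v
  exactly_one : ∀ u v, G.Adj u v → (dir u v = true ↔ ¬ dir v u = true)

/-- Out-degree of `v` w.r.t. a directed-edge relation `d`. -/
def outDegF {V : Type*} [Fintype V] (d : V → V → Bool) (v : V) : ℕ :=
  (Finset.univ.filter fun w => d v w = true).card

/-- Out-degree of a vertex in an orientation. -/
def GraphOrientation.outDeg {V : Type*} [Fintype V] {G : SimpleGraph V}
    (o : GraphOrientation G) (v : V) : ℕ := outDegF o.dir v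

/-- Maximum out-degree `Δ` of an orientation. -/
def GraphOrientation.maxOutDeg {V : Type*} [Fintype V] {G : SimpleGraph V}
    (o : GraphOrientation G) : ℕ := Finset.univ.sup o.outDeg

/-- `|E(S)|`: the number of edges of `G` with both endpoints in `S`. -/
def edgeCount {V : Type*} [Fintype V] [DecidableEq V] (G : SimpleGraph V)
    [DecidableRel G.Adj] (S : Finset V) : ℕ :=
  (G.edgeFinset.filter fun e => ∀ x ∈ e, x ∈ S).card

/-- A directed path in an orientation: a list of distinct vertices, of length at
least two (i.e. `k ≥ 1` edges), with consecutive vertices joined by directed edges. -/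
def IsDirPath {V : Type*} {G : SimpleGraph V} (o : GraphOrientation G) (p : List V) : Prop :=
  p.Nodup ∧ 2 ≤ p.length ∧ List.Chain' (fun a b => o.dir a b = true) p

/-- A directed path from `a` to `b`. -/
def IsPathFrom {V : Type*} {G : SimpleGraph V} (o : GraphOrientation G)
    (p : List V) (a b : V) : Prop :=
  IsDirPath o p ∧ p.head? = some a ∧ p.getLast? = some b

/-- Invariant 1: there is no improving path between any two vertices, i.e. no directed
path `⟨a,…,b⟩` with `odeg(a) > odeg(b) + 1`. -/
def Invariant1 {V : Type*} [Fintype V] {G : SimpleGraph V} (o : GraphOrientation G) : Prop :=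
  ∀ p a b, IsPathFrom o p a b → o.outDeg a ≤ o.outDeg b + 1

/-- Invariant 2: there is no improving path starting at a vertex of maximum out-degree. -/
def Invariant2 {V : Type*} [Fintype V] {G : SimpleGraph V} (o : GraphOrientation G) : Prop :=
  ∀ p a b, IsPathFrom o p a b → o.outDeg a = o.maxOutDeg → o.outDeg a ≤ o.outDeg b + 1

/-- Flipping the directed path `p`: every directed edge `(v_i, v_{i+1})` of `p`
is replaced by the reversed edge `(v_{i+1}, v_i)`; all other edges are unchanged. -/
def flipDir {V : Type*} [DecidableEq V] (d : V → V → Bool) (p : List V) : V → V → Bool :=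
  fun a b => if (a, b) ∈ p.zip p.tail ∨ (b, a) ∈ p.zip p.tail then d b a else d a b

/-- `G + {u,v}`: the graph obtained from `G` by inserting the edge `{u,v}`. -/
def addE {V : Type*} (G : SimpleGraph V) (u v : V) : SimpleGraph V :=
  G ⊔ SimpleGraph.fromEdgeSet {s(u, v)}

/-- `G − {u,v}`: the graph obtained from `G` by deleting the edge `{u,v}`. -/
def delE {V : Type*} (G : SimpleGraph V) (u v : V) : SimpleGraph V :=
  G.deleteEdges {s(u, v)}

/-- Insert `{u,v} ∉ E` with `odeg(u) = odeg(v) = Δ` into an Invariant-2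
orientation of maximum out-degree `Δ`, directed as `(u,v)`. If there is no improving
path in the resulting orientation `G̃` starting at `u`, then `G̃` has maximum
out-degree `Δ + 1`, `u` is the only vertex of out-degree `Δ + 1` in `G̃`, and `G̃`
satisfies Invariant 2. -/
theorem insert_peak_no_path_new_max {V : Type*} [Fintype V] [DecidableEq V]
    {G : SimpleGraph V} (o : GraphOrientation G) (hinv : Invariant2 o)
    (u v : V) (hne : u ≠ v) (hE : ¬ G.Adj u v)
    (hu : o.outDeg u = o.maxOutDeg) (hv : o.outDeg v = o.maxOutDeg)
    (ot : GraphOrientation (addE G u v))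
    (hot : ∀ a b, ot.dir a b = true ↔ (o.dir a b = true ∨ (a = u ∧ b = v)))
    (hnopath : ¬ ∃ p w, IsPathFrom ot p u w ∧ ot.outDeg w + 1 < ot.outDeg u) :
    ot.maxOutDeg = o.maxOutDeg + 1 ∧
    ot.outDeg u = o.maxOutDeg + 1 ∧
    (∀ w, ot.outDeg w = o.maxOutDeg + 1 → w = u) ∧
    Invariant2 ot := by
  have hodiruv : ¬ o.dir u v = true := fun h => hE (o.dir_adj u v h)
  have hdeg : ∀ w, w ≠ u → ot.outDeg w = o.outDeg w := by
    intro w hw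
    unfold GraphOrientation.outDeg outDegF
    congr 1
    apply Finset.filter_congr
    intro x _
    simp only [hot]
    constructor
    · rintro (h | ⟨rfl, rfl⟩)
      · exact h
      · exact absurd rfl hw
    · exact Or.inl
  have hdegu : ot.outDeg u = o.outDeg u + 1 := by
    unfold GraphOrientation.outDeg outDegF
    have hset : (Finset.univ.filter fun x => ot.dir u x = true) =
        insert v (Finset.univ.filter fun x => o.dir u x = true) := by
      ext x
      simp only [Finset.mem_insert, Finset.mem_filter, Finset.mem_univ, true_and, hot]
      tauto
    rw [hset, Finset.card_insert_of_notMem]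
    simp [hodiruv]
  have hle : ∀ w, o.outDeg w ≤ o.maxOutDeg := fun w =>
    Finset.le_sup (Finset.mem_univ w)
  have hmax : ot.maxOutDeg = o.maxOutDeg + 1 := by
    apply le_antisymm
    · apply Finset.sup_le
      intro w _
      by_cases hw : w = u
      · subst hw; rw [hdegu, hu]
      · rw [hdeg w hw]; exact le_trans (hle w) (Nat.le_succ _)
    · rw [← hu, ← hdegu]
      exact Finset.le_sup (Finset.mem_univ u)
  have huniq : ∀ w, ot.outDeg w = o.maxOutDeg + 1 → w = u := by
    intro w hwdeg
    by_contra hw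
    rw [hdeg w hw] at hwdeg
    have := hle w
    omega
  refine ⟨hmax, by rw [hdegu, hu], huniq, ?_⟩
  intro p a b hpath ha
  rw [hmax] at ha
  have hau : a = u := huniq a ha
  subst hau
  by_contra h
  push_neg at h
  exact hnopath ⟨p, b, hpath, h⟩
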